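/- arXiv:1904.11107 — 7 statements merged into one kernel-verified Lean document; each statement's English description precedes it below -/
import Mathlib

section
/- Let Q, Q̃, Φ be complex matrices of sizes k×n, n×k, k×k respectively, let r be a nonzero real number, and suppose that QQ† − Q̃†Q̃ + [Φ, Φ†] + r·1ₖ = 0, Q̃Φ^ℓ = 0, and Φ^ℓ Q = 0 (where † denotes conjugate transpose and ℓ ≥ 1). Then Φ^ℓ = 0. -/
open Matrix
open scoped InnerProductSpace

noncomputable def mv {m k : ℕ} (X : Matrix (Fin m) (Fin k) ℂ) :
    EuclideanSpace ℂ (Fin m × Fin k) :=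
  (WithLp.equiv 2 _).symm fun p => X p.1 p.2

lemma tr_eq_inner {m k : ℕ} (X Y : Matrix (Fin m) (Fin k) ℂ) :
    (Xᴴ * Y).trace = ⟪mv X, mv Y⟫_ℂ := by
  simp [Matrix.trace, Matrix.diag, Matrix.mul_apply, PiLp.inner_apply,
    RCLike.inner_apply, mv, Fintype.sum_prod_type]
  exact Finset.sum_comm.trans (Finset.sum_congr rfl fun _ _ => Finset.sum_congr rfl fun _ _ => mul_comm _ _)

lemma tr_self {m k : ℕ} (X : Matrix (Fin m) (Fin k) ℂ) :
    (Xᴴ * X).trace = ((‖mv X‖ : ℝ) : ℂ) ^ 2 := by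
  rw [tr_eq_inner, inner_self_eq_norm_sq_to_K]; rfl

lemma mv_eq_zero {m k : ℕ} {X : Matrix (Fin m) (Fin k) ℂ} (h : mv X = 0) : X = 0 := by
  ext i j
  have := congrFun (congrArg (WithLp.equiv 2 _) h) (i, j)
  simpa [mv] using this

set_option maxHeartbeats 1000000 in
theorem stmt_0 (k n ℓ : ℕ) (hℓ : 1 ≤ ℓ)
    (Q : Matrix (Fin k) (Fin n) ℂ) (Qt : Matrix (Fin n) (Fin k) ℂ)
    (Φ : Matrix (Fin k) (Fin k) ℂ) (r : ℝ) (hr : r ≠ 0)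
    (hmm : Q * Qᴴ - Qtᴴ * Qt + (Φ * Φᴴ - Φᴴ * Φ) + (r : ℂ) • (1 : Matrix (Fin k) (Fin k) ℂ) = 0)
    (h1 : Qt * Φ ^ ℓ = 0) (h2 : Φ ^ ℓ * Q = 0) :
    Φ ^ ℓ = 0 := by
  set S := Φ ^ ℓ with hS
  have hcomm : Φ * S = S * Φ := (pow_mul_comm' Φ ℓ).symm ▸ rfl
  -- abbreviations for the real norms
  set α := ‖mv (Qᴴ * S)‖ with hα
  set β := ‖mv (Qt * Sᴴ)‖ with hβ
  set γ := ‖mv (Φᴴ * S)‖ with hγ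
  set γ' := ‖mv (S * Φᴴ)‖ with hγ'
  set δ := ‖mv (S * Φ)‖ with hδ
  set ν := ‖mv S‖ with hν
  -- Equation A: trace (Sᴴ * M * S) = 0
  have hA0 : Sᴴ * (Q * Qᴴ - Qtᴴ * Qt + (Φ * Φᴴ - Φᴴ * Φ) + (r : ℂ) • 1) * S = 0 := by
    rw [hmm]; simp
  have hA1 : (Qᴴ * S)ᴴ * (Qᴴ * S) - (Qt * S)ᴴ * (Qt * S)
      + ((Φᴴ * S)ᴴ * (Φᴴ * S) - (Φ * S)ᴴ * (Φ * S)) + (r : ℂ) • (Sᴴ * S) = 0 := by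
    rw [← hA0]
    simp only [conjTranspose_mul, conjTranspose_conjTranspose, Matrix.mul_add,
      Matrix.add_mul, Matrix.mul_sub, Matrix.sub_mul, Matrix.mul_smul, Matrix.smul_mul,
      Matrix.mul_one, Matrix.one_mul, Matrix.mul_assoc]
  have hA2 : ((α : ℂ)) ^ 2 + (((γ : ℂ)) ^ 2 - ((‖mv (Φ * S)‖ : ℝ) : ℂ) ^ 2)
      + (r : ℂ) * ((ν : ℂ)) ^ 2 = 0 := by
    have := congrArg Matrix.trace hA1
    rw [h1] at this
    simp only [Matrix.trace_add, Matrix.trace_sub, Matrix.trace_smul, tr_self,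
      Matrix.conjTranspose_zero, Matrix.zero_mul, Matrix.trace_zero, Matrix.mul_zero,
      smul_eq_mul, sub_zero] at this
    convert this using 3
  have hmvΦS : ‖mv (Φ * S)‖ = δ := by rw [hδ, hcomm]
  rw [hmvΦS] at hA2
  have hA : α ^ 2 + (γ ^ 2 - δ ^ 2) + r * ν ^ 2 = 0 := by exact_mod_cast hA2
  -- Equation B: trace (S * M * Sᴴ) = 0
  have hB0 : S * (Q * Qᴴ - Qtᴴ * Qt + (Φ * Φᴴ - Φᴴ * Φ) + (r : ℂ) • 1) * Sᴴ = 0 := by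
    rw [hmm]; simp
  have hB1 : (S * Q) * (S * Q)ᴴ - (Qt * Sᴴ)ᴴ * (Qt * Sᴴ)
      + ((S * Φ) * (S * Φ)ᴴ - (S * Φᴴ) * (S * Φᴴ)ᴴ) + (r : ℂ) • (S * Sᴴ) = 0 := by
    rw [← hB0]
    simp only [conjTranspose_mul, conjTranspose_conjTranspose, Matrix.mul_add,
      Matrix.add_mul, Matrix.mul_sub, Matrix.sub_mul, Matrix.mul_smul, Matrix.smul_mul,
      Matrix.mul_one, Matrix.one_mul, Matrix.mul_assoc]
  have hB2 : -((β : ℂ)) ^ 2 + (((δ : ℂ)) ^ 2 - ((γ' : ℂ)) ^ 2) + (r : ℂ) * ((ν : ℂ)) ^ 2 = 0 := by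
    have := congrArg Matrix.trace hB1
    rw [h2] at this
    simp only [Matrix.zero_mul, Matrix.trace_add, Matrix.trace_sub, Matrix.trace_smul,
      Matrix.trace_zero, smul_eq_mul] at this
    rw [Matrix.trace_mul_comm (S * Φ) ((S * Φ)ᴴ),
      Matrix.trace_mul_comm (S * Φᴴ) ((S * Φᴴ)ᴴ),
      Matrix.trace_mul_comm S Sᴴ, tr_self, tr_self, tr_self, tr_self] at this
    linear_combination this
  have hB : -β ^ 2 + (δ ^ 2 - γ' ^ 2) + r * ν ^ 2 = 0 := by exact_mod_cast hB2
  -- Cross term: ⟪mv (Φᴴ * S), mv (S * Φᴴ)⟫ = δ ^ 2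
  have hcross : ⟪mv (Φᴴ * S), mv (S * Φᴴ)⟫_ℂ = ((δ : ℂ)) ^ 2 := by
    rw [← tr_eq_inner]
    have e1 : (Φᴴ * S)ᴴ * (S * Φᴴ) = Sᴴ * (Φ * S) * Φᴴ := by
      simp [conjTranspose_mul, Matrix.mul_assoc]
    rw [e1, hcomm]
    have e2 : (Sᴴ * (S * Φ) * Φᴴ).trace = (Φᴴ * (Sᴴ * (S * Φ))).trace :=
      Matrix.trace_mul_comm _ _
    rw [e2]
    have e3 : Φᴴ * (Sᴴ * (S * Φ)) = (S * Φ)ᴴ * (S * Φ) := by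
      simp [conjTranspose_mul, Matrix.mul_assoc]
    rw [e3, tr_self]
  -- Cauchy–Schwarz
  have hCS : δ ^ 2 ≤ γ * γ' := by
    have h := norm_inner_le_norm (𝕜 := ℂ) (mv (Φᴴ * S)) (mv (S * Φᴴ))
    rw [hcross] at h
    calc δ ^ 2 = ‖((δ : ℂ)) ^ 2‖ := by
          rw [norm_pow, Complex.norm_real, Real.norm_eq_abs, abs_of_nonneg (norm_nonneg _)]
      _ ≤ γ * γ' := h
  have hαn : 0 ≤ α := norm_nonneg _
  have hβn : 0 ≤ β := norm_nonneg _
  have hγn : 0 ≤ γ := norm_nonneg _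
  have hγ'n : 0 ≤ γ' := norm_nonneg _
  clear_value α β γ γ' δ ν
  have hkey : α = 0 ∧ β = 0 ∧ γ = γ' := by
    have h0 : α ^ 2 + β ^ 2 + (γ - γ') ^ 2 ≤ 0 := by nlinarith
    constructor
    · nlinarith [sq_nonneg α, sq_nonneg β, sq_nonneg (γ - γ')]
    constructor
    · nlinarith [sq_nonneg α, sq_nonneg β, sq_nonneg (γ - γ')]
    · nlinarith [sq_nonneg α, sq_nonneg β, sq_nonneg (γ - γ')]
  obtain ⟨hα0, hβ0, hγγ⟩ := hkey
  have hrν : r * ν ^ 2 = 0 := by nlinarith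
  have hν2 : ν ^ 2 = 0 := by
    rcases mul_eq_zero.mp hrν with h | h
    · exact absurd h hr
    · exact h
  have hν0 : ‖mv S‖ = 0 := by
    rw [← hν]
    exact pow_eq_zero_iff two_ne_zero |>.mp hν2
  exact mv_eq_zero (norm_eq_zero.mp hν0)
end

section
/- Let Φ and Φ† be k×k complex matrices († denoting conjugate transpose) and ℓ ≥ 1. Then tr([Φ^ℓ, (Φ†)^ℓ][Φ, Φ†]) = tr([Φ, (Φ†)^ℓ][Φ^ℓ, Φ†]). -/
open Matrix

lemma aux_comm_trace {n : Type*} [Fintype n] [DecidableEq n]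
    (A B C D : Matrix n n ℂ) :
    ((A * B - B * A) * (C * D - D * C)).trace
      = (A * B * C * D).trace - (A * B * D * C).trace
        - (B * A * C * D).trace + (B * A * D * C).trace := by
  simp only [sub_mul, mul_sub, trace_sub, Matrix.mul_assoc]
  ring

lemma aux_cyc {n : Type*} [Fintype n] [DecidableEq n]
    (A B C D : Matrix n n ℂ) :
    (A * B * C * D).trace = (B * C * D * A).trace := by
  rw [Matrix.mul_assoc, Matrix.mul_assoc, Matrix.trace_mul_comm]
  simp [Matrix.mul_assoc]

theorem stmt_2 (k ℓ : ℕ) (hℓ : 1 ≤ ℓ) (Φ : Matrix (Fin k) (Fin k) ℂ) :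
    ((Φ ^ ℓ * (Φᴴ) ^ ℓ - (Φᴴ) ^ ℓ * Φ ^ ℓ) * (Φ * Φᴴ - Φᴴ * Φ)).trace
      = ((Φ * (Φᴴ) ^ ℓ - (Φᴴ) ^ ℓ * Φ) * (Φ ^ ℓ * Φᴴ - Φᴴ * Φ ^ ℓ)).trace := by
  have hc : Φ * Φ ^ ℓ = Φ ^ ℓ * Φ := by rw [← pow_succ', ← pow_succ]
  rw [aux_comm_trace, aux_comm_trace]
  have h1 : (Φ * Φᴴ ^ ℓ * Φ ^ ℓ * Φᴴ).trace = (Φᴴ ^ ℓ * Φ ^ ℓ * Φᴴ * Φ).trace := by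
    rw [aux_cyc]
  have h4 : (Φᴴ ^ ℓ * Φ * Φᴴ * Φ ^ ℓ).trace = (Φ ^ ℓ * Φᴴ ^ ℓ * Φ * Φᴴ).trace := by
    rw [aux_cyc (Φ ^ ℓ)]
  have h2 : (Φ * Φᴴ ^ ℓ * Φᴴ * Φ ^ ℓ).trace = (Φ ^ ℓ * Φᴴ ^ ℓ * Φᴴ * Φ).trace := by
    rw [aux_cyc Φ, aux_cyc (Φ ^ ℓ)]
    simp only [Matrix.mul_assoc, hc]
  have h3 : (Φᴴ ^ ℓ * Φ * Φ ^ ℓ * Φᴴ).trace = (Φᴴ ^ ℓ * Φ ^ ℓ * Φ * Φᴴ).trace := by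
    rw [Matrix.mul_assoc (Φᴴ ^ ℓ) Φ, hc, ← Matrix.mul_assoc]
  rw [h1, h2, h3, h4]
  ring
end

section
/- Let Q ∈ Hom(ℂⁿ, ℂᵏ), Q̃ ∈ Hom(ℂᵏ, ℂⁿ), Φ ∈ End(ℂᵏ), ℓ ≥ 1, with Φ^ℓ = 0 and Σ_{i=0}^{ℓ−1} Φ^i QQ̃ Φ^{ℓ−1−i} = 0. Define u_m = Q̃Φ^m Q for m ≥ 0. Then for every j with 1 ≤ j ≤ ℓ, one has Σ_{i=1}^{j} u_{ℓ−i} · u_{ℓ−(j+1−i)} = 0. -/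
open Matrix

theorem stmt_10 (k n ℓ : ℕ) (hℓ : 1 ≤ ℓ)
    (Q : Matrix (Fin k) (Fin n) ℂ) (Qt : Matrix (Fin n) (Fin k) ℂ)
    (Φ : Matrix (Fin k) (Fin k) ℂ)
    (hnil : Φ ^ ℓ = 0)
    (hmm : ∑ i ∈ Finset.range ℓ, Φ ^ i * (Q * Qt) * Φ ^ (ℓ - 1 - i) = 0)
    (u : ℕ → Matrix (Fin n) (Fin n) ℂ) (hu : ∀ m, u m = Qt * Φ ^ m * Q) :
    ∀ j, 1 ≤ j → j ≤ ℓ →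
      ∑ i ∈ Finset.Icc 1 j, u (ℓ - i) * u (ℓ - (j + 1 - i)) = 0 := by
  intro j hj1 hjℓ
  have hnil' : ∀ m, ℓ ≤ m → Φ ^ m = 0 := by
    intro m hm
    calc Φ ^ m = Φ ^ ℓ * Φ ^ (m - ℓ) := by rw [← pow_add, Nat.add_sub_cancel' hm]
    _ = 0 := by rw [hnil, zero_mul]
  have key : ∑ a ∈ Finset.range ℓ, Φ ^ a * (Q * Qt) * Φ ^ (ℓ - 1 - a + (ℓ - j)) = 0 := by
    have h := congrArg (· * Φ ^ (ℓ - j)) hmm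
    simpa [Finset.sum_mul, mul_assoc, pow_add] using h
  have key2 : ∑ a ∈ Finset.Ico (ℓ - j) ℓ,
      Φ ^ a * (Q * Qt) * Φ ^ (ℓ - 1 - a + (ℓ - j)) = 0 := by
    rw [← key, Finset.range_eq_Ico,
      ← Finset.sum_Ico_consecutive _ (Nat.zero_le (ℓ - j)) (Nat.sub_le ℓ j)]
    have hz : ∑ a ∈ Finset.Ico 0 (ℓ - j),
        Φ ^ a * (Q * Qt) * Φ ^ (ℓ - 1 - a + (ℓ - j)) = 0 := by
      apply Finset.sum_eq_zero
      intro a ha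
      simp only [Finset.mem_Ico] at ha
      have hm : ℓ ≤ ℓ - 1 - a + (ℓ - j) := by omega
      rw [hnil' _ hm, mul_zero]
    rw [hz, zero_add]
  calc ∑ i ∈ Finset.Icc 1 j, u (ℓ - i) * u (ℓ - (j + 1 - i))
      = ∑ a ∈ Finset.Ico (ℓ - j) ℓ,
          Qt * (Φ ^ a * (Q * Qt) * Φ ^ (ℓ - 1 - a + (ℓ - j))) * Q := by
        apply Finset.sum_nbij' (fun i => ℓ - i) (fun a => ℓ - a)
        · intro i hi
          simp only [Finset.mem_Icc] at hi
          simp only [Finset.mem_Ico]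
          omega
        · intro a ha
          simp only [Finset.mem_Ico] at ha
          simp only [Finset.mem_Icc]
          omega
        · intro i hi
          simp only [Finset.mem_Icc] at hi
          omega
        · intro a ha
          simp only [Finset.mem_Ico] at ha
          omega
        · intro i hi
          simp only [Finset.mem_Icc] at hi
          have he : ℓ - 1 - (ℓ - i) + (ℓ - j) = ℓ - (j + 1 - i) := by omega
          rw [he, hu, hu]
          simp only [Matrix.mul_assoc]
    _ = Qt * (∑ a ∈ Finset.Ico (ℓ - j) ℓ,
          Φ ^ a * (Q * Qt) * Φ ^ (ℓ - 1 - a + (ℓ - j))) * Q := by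
        rw [Matrix.mul_sum, Matrix.sum_mul]
    _ = 0 := by rw [key2]; simp
end

section
/- Fix k ≥ 0 and work over the field ℚ(z, φ, ε). For 0 ≤ j ≤ j' ≤ k, define S_{jj'} = C(j',j)·∏_{r=j}^{j'-1}(rφ+ε) / [∏_{r=0}^{k-j-1}(rφ+ε+z) · ∏_{r=k-2j+1}^{k-j}(rφ+z) · ∏_{r=2j-k+1}^{j'-k+j}(rφ−z)] and (S⁻¹)_{ij} = C(j,i)·∏_{r=i}^{j-1}(rφ+ε)·∏_{r=0}^{k-j-1}(rφ+ε+z)·∏_{r=k+1-j-i}^{k-j}(rφ+z), with both matrices upper triangular (entries zero when the first index exceeds the second) and with empty products equal to 1 (products ∏_{r=a}^{b} are empty when a > b). Then the matrix product satisfies Σ_{j} (S⁻¹)_{ij} S_{jj'} = δ_{ij'} for all 0 ≤ i, j' ≤ k. -/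
noncomputable section

/-- The field ℚ(z, φ, ε). -/
abbrev K14 : Type := FractionRing (MvPolynomial (Fin 3) ℚ)

noncomputable def z14 : K14 := algebraMap (MvPolynomial (Fin 3) ℚ) K14 (MvPolynomial.X 0)
noncomputable def φ14 : K14 := algebraMap (MvPolynomial (Fin 3) ℚ) K14 (MvPolynomial.X 1)
noncomputable def ε14 : K14 := algebraMap (MvPolynomial (Fin 3) ℚ) K14 (MvPolynomial.X 2)

/-- Product `∏_{r=a}^{b} f(r)` over integers (empty when `a > b`). -/
noncomputable def P14 (a b : ℤ) (f : ℤ → K14) : K14 := ∏ r ∈ Finset.Icc a b, f r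

/-- The (upper triangular) matrix `S` of restrictions of stable classes to
fixed points for `M₁(k,2,k)`. -/
noncomputable def S14 (k : ℕ) (j j' : Fin (k + 1)) : K14 :=
  if (j : ℕ) ≤ (j' : ℕ) then
    (Nat.choose j' j : K14) * P14 (j : ℤ) ((j' : ℤ) - 1) (fun r => r * φ14 + ε14)
      / (P14 0 ((k : ℤ) - (j : ℤ) - 1) (fun r => r * φ14 + ε14 + z14)
          * P14 ((k : ℤ) - 2 * (j : ℤ) + 1) ((k : ℤ) - (j : ℤ)) (fun r => r * φ14 + z14)
          * P14 (2 * (j : ℤ) - (k : ℤ) + 1) ((j' : ℤ) - (k : ℤ) + (j : ℤ))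
              (fun r => r * φ14 - z14))
  else 0

/-- The claimed inverse matrix `S⁻¹`. -/
noncomputable def Sinv14 (k : ℕ) (i j : Fin (k + 1)) : K14 :=
  if (i : ℕ) ≤ (j : ℕ) then
    (Nat.choose j i : K14) * P14 (i : ℤ) ((j : ℤ) - 1) (fun r => r * φ14 + ε14)
      * P14 0 ((k : ℤ) - (j : ℤ) - 1) (fun r => r * φ14 + ε14 + z14)
      * P14 ((k : ℤ) + 1 - (j : ℤ) - (i : ℤ)) ((k : ℤ) - (j : ℤ)) (fun r => r * φ14 + z14)
  else 0

/-! ### Auxiliary lemmas -/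

open Finset Polynomial

section Aux

lemma alg_inj14 : Function.Injective (algebraMap (MvPolynomial (Fin 3) ℚ) K14) :=
  IsFractionRing.injective _ _

open MvPolynomial in
lemma nz_of_eval14 (p : MvPolynomial (Fin 3) ℚ) (v : Fin 3 → ℚ) (h : eval v p ≠ 0) :
    algebraMap (MvPolynomial (Fin 3) ℚ) K14 p ≠ 0 := by
  intro hz
  exact h (by rw [show p = 0 from alg_inj14 (by simpa using hz), map_zero])

open MvPolynomial in
lemma intCast_eq14 (r : ℤ) :
    (r : K14) = algebraMap (MvPolynomial (Fin 3) ℚ) K14 (C (r : ℚ)) := by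
  have := map_intCast (algebraMap (MvPolynomial (Fin 3) ℚ) K14) r
  rw [← this]; norm_cast

open MvPolynomial in
lemma fe_ne14 (r : ℤ) : (r : K14) * φ14 + ε14 ≠ 0 := by
  rw [intCast_eq14, φ14, ε14, ← map_mul, ← map_add]
  apply nz_of_eval14 _ (fun i => if i = 2 then 1 else 0)
  simp

open MvPolynomial in
lemma fez_ne14 (r : ℤ) : (r : K14) * φ14 + ε14 + z14 ≠ 0 := by
  rw [intCast_eq14, φ14, ε14, z14, ← map_mul, ← map_add, ← map_add]
  apply nz_of_eval14 _ (fun i => if i = 2 then 1 else 0)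
  simp

open MvPolynomial in
lemma fz_ne14 (r : ℤ) : (r : K14) * φ14 + z14 ≠ 0 := by
  rw [intCast_eq14, φ14, z14, ← map_mul, ← map_add]
  apply nz_of_eval14 _ (fun i => if i = 0 then 1 else 0)
  simp

open MvPolynomial in
lemma fmz_ne14 (r : ℤ) : (r : K14) * φ14 - z14 ≠ 0 := by
  rw [intCast_eq14, φ14, z14, ← map_mul, ← map_sub]
  apply nz_of_eval14 _ (fun i => if i = 0 then 1 else 0)
  simp

lemma phi_ne14 : φ14 ≠ 0 := by
  rw [φ14]
  apply nz_of_eval14 _ (fun i => if i = 1 then 1 else 0)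
  simp

/-! Interval product manipulation -/

lemma Icc_split14 {M : Type*} [CommMonoid M] (a b c : ℤ) (h1 : a ≤ b + 1) (h2 : b ≤ c)
    (f : ℤ → M) :
    ∏ t ∈ Finset.Icc a c, f t = (∏ t ∈ Finset.Icc a b, f t) * ∏ t ∈ Finset.Icc (b+1) c, f t := by
  rw [← Finset.prod_union]
  · congr 1; ext x; simp only [Finset.mem_union, Finset.mem_Icc]; omega
  · rw [Finset.disjoint_left]; intro x hx hx'
    simp only [Finset.mem_Icc] at hx hx'; omega

lemma Icc_reflect14 {M : Type*} [CommMonoid M] (a b c : ℤ) (f : ℤ → M) :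
    ∏ t ∈ Finset.Icc a b, f t = ∏ t ∈ Finset.Icc (c - b) (c - a), f (c - t) := by
  rw [show Finset.Icc (c - b) (c - a) = (Finset.Icc a b).image (fun t => c - t) by
    ext x; simp only [Finset.mem_Icc, Finset.mem_image]; constructor
    · intro h; exact ⟨c - x, by omega, by omega⟩
    · rintro ⟨n, hn, rfl⟩; omega]
  rw [Finset.prod_image (by intro x _ y _ h; have h' : c - x = c - y := h; omega)]
  simp

lemma Icc_shift14 {M : Type*} [CommMonoid M] (a b c : ℤ) (f : ℤ → M) :
    ∏ t ∈ Finset.Icc a b, f t = ∏ t ∈ Finset.Icc (a + c) (b + c), f (t - c) := by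
  rw [show Finset.Icc (a + c) (b + c) = (Finset.Icc a b).image (fun t => t + c) by
    ext x; simp only [Finset.mem_Icc, Finset.mem_image]; constructor
    · intro h; exact ⟨x - c, by omega, by omega⟩
    · rintro ⟨n, hn, rfl⟩; omega]
  rw [Finset.prod_image (by intro x _ y _ h; have h' : x + c = y + c := h; omega)]
  simp

lemma Icc_int_range14 {M : Type*} [CommMonoid M] (m : ℕ) (f : ℤ → M) :
    ∏ t ∈ Finset.Icc (0:ℤ) ((m:ℤ) - 1), f t = ∏ t ∈ Finset.range m, f (t:ℤ) := by
  rw [show Finset.Icc (0:ℤ) ((m:ℤ)-1) = (Finset.range m).image (fun n : ℕ => (n:ℤ)) by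
    ext x; simp only [Finset.mem_Icc, Finset.mem_image, Finset.mem_range]; constructor
    · intro h; exact ⟨x.toNat, by omega, by omega⟩
    · rintro ⟨n, hn, rfl⟩; omega]
  rw [Finset.prod_image (by intro x _ y _ h; have h' : (x:ℤ) = y := h; omega)]

lemma Icc_cast14 {M : Type*} [CommMonoid M] (a b : ℕ) (f : ℤ → M) :
    ∏ t ∈ Finset.Icc (a : ℤ) (b : ℤ), f t = ∏ t ∈ Finset.Icc a b, f (t : ℤ) := by
  rw [show Finset.Icc (a : ℤ) (b : ℤ) = (Finset.Icc a b).image (fun n : ℕ => (n : ℤ)) by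
    ext x; simp only [Finset.mem_Icc, Finset.mem_image]; constructor
    · intro h; exact ⟨x.toNat, by omega, by omega⟩
    · rintro ⟨n, hn, rfl⟩; omega]
  rw [Finset.prod_image (by intro x _ y _ h; have h' : (x:ℤ) = y := h; omega)]

/-! P14 basics -/

lemma P14_empty (a b : ℤ) (h : b < a) (f : ℤ → K14) : P14 a b f = 1 := by
  rw [P14, Finset.Icc_eq_empty (by omega), Finset.prod_empty]

lemma P14_split (a b c : ℤ) (h1 : a ≤ b + 1) (h2 : b ≤ c) (f : ℤ → K14) :
    P14 a c f = P14 a b f * P14 (b+1) c f := Icc_split14 a b c h1 h2 f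

lemma P14_ne (a b : ℤ) (f : ℤ → K14) (h : ∀ r, f r ≠ 0) : P14 a b f ≠ 0 := by
  rw [P14]
  exact Finset.prod_ne_zero_iff.2 (fun r _ => h r)

/-! ### The numeric identity -/

lemma prodA14 (s m : ℕ) (h : m ≤ s) :
    ∏ t ∈ Finset.range m, ((t : ℚ) - s) = (-1)^m * (Nat.factorial s) / (Nat.factorial (s - m)) := by
  induction m with
  | zero => simp [(by exact_mod_cast (Nat.factorial_pos s).ne' : ((Nat.factorial s : ℚ)) ≠ 0)]
  | succ m ih =>
    rw [Finset.prod_range_succ, ih (by omega)]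
    have h1 : s - m = (s - (m+1)) + 1 := by omega
    rw [h1, Nat.factorial_succ]
    have h2 : ((s - (m+1) : ℕ) : ℚ) + 1 = (s : ℚ) - m := by
      have : ((s - (m+1) : ℕ) : ℚ) = (s : ℚ) - (m + 1) := by
        push_cast [Nat.cast_sub (by omega : m + 1 ≤ s)]; ring
      rw [this]; ring
    have f1 : ((Nat.factorial (s - (m+1)) : ℚ)) ≠ 0 := by
      exact_mod_cast (Nat.factorial_pos _).ne'
    have f2 : ((s : ℚ) - m) ≠ 0 := by
      have : (m : ℚ) < s := by exact_mod_cast (by omega : m < s)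
      intro hc; nlinarith
    push_cast
    rw [h2]
    field_simp
    ring

lemma prodB14 (s a : ℕ) (hsa : s ≤ a) : ∀ b, a ≤ b →
    ∏ t ∈ Finset.Icc (a+1) b, ((t : ℚ) - s)
      = (Nat.factorial (b - s)) / (Nat.factorial (a - s)) := by
  intro b
  induction b with
  | zero => intro hab; interval_cases a; simp
  | succ b ih =>
    intro hab
    rcases Nat.lt_or_ge a (b+1) with hlt | hge
    · have hab' : a ≤ b := by omega
      rw [Finset.prod_Icc_succ_top (by omega), ih hab']
      have h1 : b + 1 - s = (b - s) + 1 := by omega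
      rw [h1, Nat.factorial_succ]
      have h2 : ((b - s : ℕ) : ℚ) + 1 = ((b:ℚ) + 1) - s := by
        push_cast [Nat.cast_sub (by omega : s ≤ b)]; ring
      push_cast
      rw [h2]
      ring
    · have : a = b + 1 := by omega
      subst this
      rw [Finset.Icc_eq_empty_of_lt (by omega : b + 1 < b + 1 + 1), Finset.prod_empty,
        eq_comm, div_eq_one_iff_eq]
      exact_mod_cast (Nat.factorial_pos _).ne'

lemma numeric14 (n s : ℕ) (hs : s ≤ 2*n) :
    ∑ m ∈ Finset.range (n+1), ((-1:ℚ))^m * (Nat.choose n m) * (2*(m:ℚ) - s) *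
      (∏ t ∈ Finset.range m, ((t:ℚ) - s)) *
      (∏ t ∈ Finset.Icc (m+n+1) (2*n), ((t:ℚ) - s)) = 0 := by
  set f : ℕ → ℚ := fun m => ((-1:ℚ))^m * (Nat.choose n m) * (2*(m:ℚ) - s) *
      (∏ t ∈ Finset.range m, ((t:ℚ) - s)) *
      (∏ t ∈ Finset.Icc (m+n+1) (2*n), ((t:ℚ) - s)) with hf
  have hvan : ∀ m, m ∈ Finset.range (n+1) → m ∉ Finset.Icc (s - n) (min n s) → f m = 0 := by
    intro m hm hmD
    simp only [Finset.mem_range] at hm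
    simp only [Finset.mem_Icc, not_and_or, not_le] at hmD
    rcases hmD with h | h
    · have hmem : s ∈ Finset.Icc (m+n+1) (2*n) := by simp only [Finset.mem_Icc]; omega
      have : (∏ t ∈ Finset.Icc (m+n+1) (2*n), ((t:ℚ) - s)) = 0 := by
        apply Finset.prod_eq_zero hmem; simp
      simp [hf, this]
    · have hmem : s ∈ Finset.range m := by simp; omega
      have : (∏ t ∈ Finset.range m, ((t:ℚ) - s)) = 0 := by
        apply Finset.prod_eq_zero hmem; simp
      simp [hf, this]
  have hsub : Finset.Icc (s - n) (min n s) ⊆ Finset.range (n+1) := by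
    intro m hm; simp only [Finset.mem_Icc] at hm; simp; omega
  rw [← Finset.sum_subset hsub (by intro m hm hmn; exact hvan m hm hmn)]
  have hclosed : ∀ m, m ∈ Finset.Icc (s - n) (min n s) →
      f m = (Nat.factorial s) * (Nat.factorial (2*n - s)) * (Nat.factorial n) * (2*(m:ℚ) - s) /
        ((Nat.factorial m) * (Nat.factorial (n - m)) * (Nat.factorial (s - m))
          * (Nat.factorial (m + n - s))) := by
    intro m hm
    simp only [Finset.mem_Icc, le_min_iff] at hm
    have hmn : m ≤ n := by omega
    have hms : m ≤ s := by omega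
    have hsmn : s ≤ m + n := by omega
    rw [hf]
    simp only
    rw [prodA14 s m hms, prodB14 s (m+n) (by omega) (2*n) (by omega),
      Nat.cast_choose ℚ hmn]
    have e1 : ((Nat.factorial m : ℚ)) ≠ 0 := by exact_mod_cast (Nat.factorial_pos _).ne'
    have e2 : ((Nat.factorial (n-m) : ℚ)) ≠ 0 := by exact_mod_cast (Nat.factorial_pos _).ne'
    have e3 : ((Nat.factorial (s-m) : ℚ)) ≠ 0 := by exact_mod_cast (Nat.factorial_pos _).ne'
    have e4 : ((Nat.factorial (m+n-s) : ℚ)) ≠ 0 := by exact_mod_cast (Nat.factorial_pos _).ne'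
    have hsgn : ((-1:ℚ))^m * ((-1:ℚ))^m = 1 := by rw [← mul_pow]; norm_num
    field_simp
    linear_combination (2*(m:ℚ) - ↑s) * hsgn
  rw [Finset.sum_congr rfl hclosed]
  have g_mem : ∀ m ∈ Finset.Icc (s - n) (min n s), s - m ∈ Finset.Icc (s - n) (min n s) := by
    intro m hm; simp only [Finset.mem_Icc, le_min_iff] at *; omega
  apply Finset.sum_involution (g := fun m hm => s - m) ?h1 ?h2 g_mem ?h3
  case h3 =>
    intro m hm; simp only [Finset.mem_Icc, le_min_iff] at hm
    show s - (s - m) = m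
    omega
  case h2 =>
    intro m hm hne
    simp only [Finset.mem_Icc, le_min_iff] at hm
    intro hgm
    have hgm' : s - m = m := hgm
    apply hne
    have : (2*(m:ℚ) - s) = 0 := by
      have : s = 2 * m := by omega
      subst this; push_cast; ring
    rw [this]
    simp
  case h1 =>
    intro m hm
    simp only [Finset.mem_Icc, le_min_iff] at hm
    show _ + _ = (0:ℚ)
    have hmn : m ≤ n := by omega
    have hms : m ≤ s := by omega
    have hsmn : s ≤ m + n := by omega
    have r1 : s - (s - m) = m := by omega
    have r2 : n - (s - m) = m + n - s := by omega
    have r3 : (s - m) + n - s = n - m := by omega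
    have r4 : (((s - m : ℕ)) : ℚ) = (s : ℚ) - m := by
      push_cast [Nat.cast_sub hms]; ring
    rw [r1, r2, r3, r4]
    have e1 : ((Nat.factorial m : ℚ)) ≠ 0 := by exact_mod_cast (Nat.factorial_pos _).ne'
    have e2 : ((Nat.factorial (n-m) : ℚ)) ≠ 0 := by exact_mod_cast (Nat.factorial_pos _).ne'
    have e3 : ((Nat.factorial (s-m) : ℚ)) ≠ 0 := by exact_mod_cast (Nat.factorial_pos _).ne'
    have e4 : ((Nat.factorial (m+n-s) : ℚ)) ≠ 0 := by exact_mod_cast (Nat.factorial_pos _).ne'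
    field_simp
    ring

/-! ### The polynomial identity -/

noncomputable def Qpoly14 (n : ℕ) : Polynomial ℚ :=
  ∑ m ∈ Finset.range (n+1), (-1 : ℚ[X])^m * (n.choose m : ℚ[X]) * (X + ((2*m : ℕ) : ℚ[X]))
    * (∏ t ∈ Finset.range m, (X + (t : ℚ[X])))
    * (∏ t ∈ Finset.Icc (m+n+1) (2*n), (X + (t : ℚ[X])))

lemma Qpoly14_natDegree_le (n : ℕ) : (Qpoly14 n).natDegree ≤ n + 1 := by
  apply Polynomial.natDegree_sum_le_of_forall_le
  intro m hm
  simp only [Finset.mem_range] at hm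
  have dP1 : (∏ t ∈ Finset.range m, (X + (t : ℚ[X]))).natDegree ≤ m := by
    refine le_trans (Polynomial.natDegree_prod_le _ _) ?_
    refine le_trans (Finset.sum_le_card_nsmul _ _ 1 ?_) (by simp)
    intro t _
    rw [← Polynomial.C_eq_natCast, Polynomial.natDegree_X_add_C]
  have dP2 : (∏ t ∈ Finset.Icc (m+n+1) (2*n), (X + (t : ℚ[X]))).natDegree ≤ n - m := by
    refine le_trans (Polynomial.natDegree_prod_le _ _) ?_
    refine le_trans (Finset.sum_le_card_nsmul _ _ 1 ?_) ?_
    · intro t _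
      rw [← Polynomial.C_eq_natCast, Polynomial.natDegree_X_add_C]
    · simp [Nat.card_Icc]; omega
  have d1 : ((-1 : ℚ[X])^m * (n.choose m : ℚ[X])).natDegree = 0 := by
    rw [← Polynomial.C_eq_natCast, ← Polynomial.C_1, ← Polynomial.C_neg, ← Polynomial.C_pow,
      ← Polynomial.C_mul, Polynomial.natDegree_C]
  have dX : (X + ((2*m : ℕ) : ℚ[X])).natDegree ≤ 1 := by
    rw [← Polynomial.C_eq_natCast, Polynomial.natDegree_X_add_C]
  calc (((-1 : ℚ[X])^m * (n.choose m : ℚ[X]) * (X + ((2*m : ℕ) : ℚ[X]))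
        * (∏ t ∈ Finset.range m, (X + (t : ℚ[X]))))
        * (∏ t ∈ Finset.Icc (m+n+1) (2*n), (X + (t : ℚ[X])))).natDegree
      ≤ ((-1 : ℚ[X])^m * (n.choose m : ℚ[X]) * (X + ((2*m : ℕ) : ℚ[X]))
        * (∏ t ∈ Finset.range m, (X + (t : ℚ[X])))).natDegree
        + (∏ t ∈ Finset.Icc (m+n+1) (2*n), (X + (t : ℚ[X]))).natDegree :=
        Polynomial.natDegree_mul_le
    _ ≤ (((-1 : ℚ[X])^m * (n.choose m : ℚ[X]) * (X + ((2*m : ℕ) : ℚ[X]))).natDegree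
        + (∏ t ∈ Finset.range m, (X + (t : ℚ[X]))).natDegree) + (n - m) :=
        add_le_add Polynomial.natDegree_mul_le dP2
    _ ≤ ((((-1 : ℚ[X])^m * (n.choose m : ℚ[X])).natDegree
        + (X + ((2*m : ℕ) : ℚ[X])).natDegree) + m) + (n - m) :=
        add_le_add (add_le_add Polynomial.natDegree_mul_le dP1) le_rfl
    _ ≤ ((0 + 1) + m) + (n - m) := add_le_add (add_le_add (add_le_add d1.le dX) le_rfl) le_rfl
    _ ≤ n + 1 := by omega

lemma Qpoly14_eq_zero (n : ℕ) (hn : 1 ≤ n) : Qpoly14 n = 0 := by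
  apply Polynomial.eq_zero_of_natDegree_lt_card_of_eval_eq_zero
    (f := fun i : Fin (2*n+1) => -((i : ℕ) : ℚ))
  · intro a b hab
    simp only [neg_inj, Nat.cast_inj] at hab
    exact Fin.ext hab
  · intro s
    rw [Qpoly14, Polynomial.eval_finset_sum]
    have heq : ∀ m ∈ Finset.range (n+1),
        Polynomial.eval (-((s:ℕ):ℚ)) ((-1 : ℚ[X])^m * (n.choose m : ℚ[X])
          * (X + ((2*m : ℕ) : ℚ[X]))
          * (∏ t ∈ Finset.range m, (X + (t : ℚ[X])))
          * (∏ t ∈ Finset.Icc (m+n+1) (2*n), (X + (t : ℚ[X]))))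
        = ((-1:ℚ))^m * (Nat.choose n m) * (2*(m:ℚ) - (s:ℕ)) *
            (∏ t ∈ Finset.range m, ((t:ℚ) - (s:ℕ))) *
            (∏ t ∈ Finset.Icc (m+n+1) (2*n), ((t:ℚ) - (s:ℕ))) := by
      intro m _
      simp only [Polynomial.eval_mul, Polynomial.eval_pow, Polynomial.eval_neg,
        Polynomial.eval_one, Polynomial.eval_add, Polynomial.eval_X, Polynomial.eval_natCast,
        Polynomial.eval_prod]
      rw [Finset.prod_congr rfl (fun t _ => by ring :
          ∀ t ∈ Finset.range m, (-((s:ℕ):ℚ) + t) = ((t:ℚ) - (s:ℕ))),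
        Finset.prod_congr rfl (fun t _ => by ring :
          ∀ t ∈ Finset.Icc (m+n+1) (2*n), (-((s:ℕ):ℚ) + t) = ((t:ℚ) - (s:ℕ)))]
      push_cast
      ring
    rw [Finset.sum_congr rfl heq]
    exact numeric14 n s (by omega)
  · calc (Qpoly14 n).natDegree ≤ n + 1 := Qpoly14_natDegree_le n
      _ < Fintype.card (Fin (2*n+1)) := by simp; omega

/-! ### Transfer to `K14` -/

/-- `gg c t = (c+t)·φ − z`. -/
noncomputable def gg14 (c t : ℤ) : K14 := ((c + t : ℤ) : K14) * φ14 - z14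

lemma gg14_ne (c t : ℤ) : gg14 c t ≠ 0 := fmz_ne14 (c + t)

lemma gg14_eq (c t : ℤ) : gg14 c t = ((c : ℤ) : K14) * φ14 - z14 + (t : K14) * φ14 := by
  rw [gg14]; push_cast; ring

lemma keyK14 (n : ℕ) (hn : 1 ≤ n) (v : K14) :
    ∑ m ∈ Finset.range (n+1), (-1:K14)^m * (n.choose m : K14) * (v + ((2*m : ℕ) : K14)) *
      (∏ t ∈ Finset.range m, (v + (t:K14))) *
      (∏ t ∈ Finset.Icc (m+n+1) (2*n), (v + (t:K14))) = 0 := by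
  have h := congrArg (Polynomial.aeval v) (Qpoly14_eq_zero n hn)
  rw [Qpoly14, map_zero, map_sum] at h
  rw [← h]
  apply Finset.sum_congr rfl
  intro m _
  simp only [map_mul, map_pow, map_neg, map_one, map_add, Polynomial.aeval_X, map_natCast,
    map_prod]

lemma keyPoly14 (n : ℕ) (hn : 1 ≤ n) (u φ : K14) (hφ : φ ≠ 0) :
    ∑ m ∈ Finset.range (n+1), (-1:K14)^m * (n.choose m : K14) * (u + ((2*m : ℕ) : K14)*φ) *
      (∏ t ∈ Finset.range m, (u + (t:K14)*φ)) *
      (∏ t ∈ Finset.Icc (m+n+1) (2*n), (u + (t:K14)*φ)) = 0 := by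
  have h := congrArg (· * φ^(n+1)) (keyK14 n hn (u/φ))
  simp only [zero_mul, Finset.sum_mul] at h
  rw [← h]
  apply Finset.sum_congr rfl
  intro m hm
  simp only [Finset.mem_range] at hm
  have hmn : m ≤ n := by omega
  have hcard : (Finset.Icc (m+n+1) (2*n)).card = n - m := by
    rw [Nat.card_Icc]; omega
  have hsplit : φ^(n+1) = φ * (φ^m * φ^(n-m)) := by
    rw [← pow_add, ← pow_succ']
    congr 1
    omega
  have p1 : ∏ t ∈ Finset.range m, (u + (t:K14)*φ)
      = (∏ t ∈ Finset.range m, (u/φ + (t:K14))) * φ^m := by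
    calc ∏ t ∈ Finset.range m, (u + (t:K14)*φ)
        = ∏ t ∈ Finset.range m, ((u/φ + (t:K14)) * φ) :=
          Finset.prod_congr rfl (fun t _ => by field_simp)
      _ = (∏ t ∈ Finset.range m, (u/φ + (t:K14))) * ∏ _t ∈ Finset.range m, φ :=
          Finset.prod_mul_distrib
      _ = (∏ t ∈ Finset.range m, (u/φ + (t:K14))) * φ^m := by
          rw [Finset.prod_const, Finset.card_range]
  have p2 : ∏ t ∈ Finset.Icc (m+n+1) (2*n), (u + (t:K14)*φ)
      = (∏ t ∈ Finset.Icc (m+n+1) (2*n), (u/φ + (t:K14))) * φ^(n-m) := by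
    calc ∏ t ∈ Finset.Icc (m+n+1) (2*n), (u + (t:K14)*φ)
        = ∏ t ∈ Finset.Icc (m+n+1) (2*n), ((u/φ + (t:K14)) * φ) :=
          Finset.prod_congr rfl (fun t _ => by field_simp)
      _ = (∏ t ∈ Finset.Icc (m+n+1) (2*n), (u/φ + (t:K14)))
          * ∏ _t ∈ Finset.Icc (m+n+1) (2*n), φ :=
          Finset.prod_mul_distrib
      _ = (∏ t ∈ Finset.Icc (m+n+1) (2*n), (u/φ + (t:K14))) * φ^(n-m) := by
          rw [Finset.prod_const, hcard]
  have p0 : u + ((2*m : ℕ) : K14)*φ = (u/φ + ((2*m : ℕ) : K14)) * φ := by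
    field_simp
  rw [p0, p1, p2, hsplit]
  ring

/-- The key rational identity, in terms of `gg14`. -/
lemma sumR14 (n : ℕ) (hn : 1 ≤ n) (c : ℤ) :
    ∑ m ∈ Finset.range (n+1), ((-1:K14)^m * (n.choose m : K14) * gg14 c (2*(m:ℤ))
      / ∏ t ∈ Finset.Icc (m:ℤ) ((m:ℤ)+n), gg14 c t) = 0 := by
  set u : K14 := ((c : ℤ) : K14) * φ14 - z14 with hu
  have hgu : ∀ t : ℤ, gg14 c t = u + (t : K14) * φ14 := fun t => gg14_eq c t
  -- full product
  set F : K14 := ∏ t ∈ Finset.Icc (0:ℤ) (2*(n:ℤ)), gg14 c t with hF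
  have hFne : F ≠ 0 := Finset.prod_ne_zero_iff.2 (fun t _ => gg14_ne c t)
  have key := keyPoly14 n hn u φ14 phi_ne14
  -- show (∑ ...) * F = 0
  have hmul : (∑ m ∈ Finset.range (n+1), ((-1:K14)^m * (n.choose m : K14) * gg14 c (2*(m:ℤ))
      / ∏ t ∈ Finset.Icc (m:ℤ) ((m:ℤ)+n), gg14 c t)) * F = 0 := by
    rw [Finset.sum_mul, ← key]
    apply Finset.sum_congr rfl
    intro m hm
    simp only [Finset.mem_range] at hm
    have hmn : m ≤ n := by omega
    -- split F
    have hsplit1 : F = (∏ t ∈ Finset.Icc (0:ℤ) ((m:ℤ)-1), gg14 c t)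
        * ∏ t ∈ Finset.Icc (m:ℤ) (2*(n:ℤ)), gg14 c t := by
      rw [hF, Icc_split14 0 ((m:ℤ)-1) (2*(n:ℤ)) (by omega) (by omega)]
      norm_num
    have hsplit2 : ∏ t ∈ Finset.Icc (m:ℤ) (2*(n:ℤ)), gg14 c t
        = (∏ t ∈ Finset.Icc (m:ℤ) ((m:ℤ)+n), gg14 c t)
          * ∏ t ∈ Finset.Icc ((m:ℤ)+n+1) (2*(n:ℤ)), gg14 c t := by
      rw [Icc_split14 (m:ℤ) ((m:ℤ)+n) (2*(n:ℤ)) (by omega) (by omega)]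
    have hPm : (∏ t ∈ Finset.Icc (m:ℤ) ((m:ℤ)+n), gg14 c t) ≠ 0 :=
      Finset.prod_ne_zero_iff.2 (fun t _ => gg14_ne c t)
    rw [hsplit1, hsplit2]
    -- convert int products to the nat-indexed form appearing in keyPoly14
    have c1 : ∏ t ∈ Finset.Icc (0:ℤ) ((m:ℤ)-1), gg14 c t
        = ∏ t ∈ Finset.range m, (u + (t:K14)*φ14) := by
      rw [Icc_int_range14]
      exact Finset.prod_congr rfl (fun t _ => by rw [hgu]; push_cast; ring)
    have c2 : ∏ t ∈ Finset.Icc ((m:ℤ)+n+1) (2*(n:ℤ)), gg14 c t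
        = ∏ t ∈ Finset.Icc (m+n+1) (2*n), (u + (t:K14)*φ14) := by
      rw [show ((m:ℤ)+n+1) = ((m+n+1 : ℕ) : ℤ) by push_cast; ring,
        show (2*(n:ℤ)) = ((2*n : ℕ) : ℤ) by push_cast; ring, Icc_cast14]
      exact Finset.prod_congr rfl (fun t _ => by rw [hgu]; push_cast; ring)
    have c0 : gg14 c (2*(m:ℤ)) = u + ((2*m : ℕ) : K14)*φ14 := by
      rw [hgu]; push_cast; ring
    rw [c1, c2, c0]
    field_simp
  rcases mul_eq_zero.1 hmul with h | h
  · exact h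
  · exact absurd h hFne

end Aux

/-! ### Per-term evaluation -/

section Term

variable (k : ℕ)

lemma Sinv14_eq_zero {k : ℕ} {i j : Fin (k+1)} (h : ¬ (i : ℕ) ≤ (j : ℕ)) :
    Sinv14 k i j = 0 := if_neg h

lemma S14_eq_zero {k : ℕ} {j j' : Fin (k+1)} (h : ¬ (j : ℕ) ≤ (j' : ℕ)) :
    S14 k j j' = 0 := if_neg h

lemma alg_aux14 (m : ℕ) (C1 C2 C3 C4 A1 A2 A3 B1 Pa Pb g2m : K14)
    (h6 : C1 * C2 = C3 * C4) (hA2 : A2 ≠ 0) (hA3 : A3 ≠ 0) (hPa : Pa ≠ 0) (hPb : Pb ≠ 0)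
    (hg : g2m ≠ 0) :
    (C1 * A1 * A2 * A3) * (C2 * B1 / (A2 * ((-1:K14)^m * Pa * A3) * Pb))
    = C3 * (A1 * B1) * ((-1:K14)^m * C4 * g2m / (Pa * (g2m * Pb))) := by
  have hs : (-1:K14)^m ≠ 0 := pow_ne_zero _ (by norm_num)
  have hsgn : (-1:K14)^m * (-1:K14)^m = 1 := by rw [← mul_pow]; norm_num
  rw [← mul_div_assoc, ← mul_div_assoc,
    div_eq_div_iff
      (by exact mul_ne_zero (mul_ne_zero hA2 (mul_ne_zero (mul_ne_zero hs hPa) hA3)) hPb)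
      (by exact mul_ne_zero hPa (mul_ne_zero hg hPb))]
  linear_combination (A1*B1*A2*A3*Pa*g2m*Pb) * h6
    - (C3*C4*A1*B1*A2*A3*Pa*g2m*Pb) * hsgn

set_option maxHeartbeats 2000000 in
/-- The value of a single term `Sinv14 i (i+m) * S14 (i+m) j'` for `i + n = j' ≤ k`, `m ≤ n`. -/
lemma Tval14 (k i m n : ℕ) (hmn : m ≤ n) (hik : i + n ≤ k)
    (hfin1 : i + m < k + 1) (hfin2 : i + n < k + 1) :
    Sinv14 k ⟨i, by omega⟩ ⟨i + m, hfin1⟩ * S14 k ⟨i + m, hfin1⟩ ⟨i + n, hfin2⟩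
    = ((i+n).choose i : K14)
      * P14 (i:ℤ) ((i:ℤ)+(n:ℤ)-1) (fun r => r * φ14 + ε14)
      * ((-1:K14)^m * ((n.choose m : ℕ) : K14) * gg14 (2*(i:ℤ)-(k:ℤ)) (2*(m:ℤ))
          / ∏ t ∈ Finset.Icc ((m:ℕ):ℤ) (((m:ℕ):ℤ)+(n:ℕ)), gg14 (2*(i:ℤ)-(k:ℤ)) t) := by
  rw [Sinv14, S14, if_pos (Nat.le_add_right i m), if_pos (by simp only [Fin.val_mk]; omega :
      ((⟨i+m, hfin1⟩ : Fin (k+1)) : ℕ) ≤ ((⟨i+n, hfin2⟩ : Fin (k+1)) : ℕ))]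
  simp only [Fin.val_mk]
  push_cast
  set fε : ℤ → K14 := fun r => (r:K14) * φ14 + ε14 with hfε
  set fεz : ℤ → K14 := fun r => (r:K14) * φ14 + ε14 + z14 with hfεz
  set fz : ℤ → K14 := fun r => (r:K14) * φ14 + z14 with hfz
  set fmz : ℤ → K14 := fun r => (r:K14) * φ14 - z14 with hfmz
  set c : ℤ := 2*(i:ℤ) - (k:ℤ) with hc
  -- (F1) join the ε-products
  have h1 : P14 (i:ℤ) ((i:ℤ)+(n:ℤ)-1) fε
      = P14 (i:ℤ) ((i:ℤ)+(m:ℤ)-1) fε * P14 ((i:ℤ)+(m:ℤ)) ((i:ℤ)+(n:ℤ)-1) fε := by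
    have := P14_split (i:ℤ) ((i:ℤ)+(m:ℤ)-1) ((i:ℤ)+(n:ℤ)-1) (by omega) (by omega) fε
    rwa [show ((i:ℤ)+(m:ℤ)-1)+1 = (i:ℤ)+(m:ℤ) from by ring] at this
  -- (F3) split the z-product in the denominator of S14
  have h2 : P14 ((k:ℤ)-2*((i:ℤ)+(m:ℤ))+1) ((k:ℤ)-((i:ℤ)+(m:ℤ))) fz
      = P14 ((k:ℤ)-2*((i:ℤ)+(m:ℤ))+1) ((k:ℤ)-((i:ℤ)+(m:ℤ))-(i:ℤ)) fz
        * P14 ((k:ℤ)+1-((i:ℤ)+(m:ℤ))-(i:ℤ)) ((k:ℤ)-((i:ℤ)+(m:ℤ))) fz := by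
    have := P14_split ((k:ℤ)-2*((i:ℤ)+(m:ℤ))+1) ((k:ℤ)-((i:ℤ)+(m:ℤ))-(i:ℤ))
      ((k:ℤ)-((i:ℤ)+(m:ℤ))) (by omega) (by omega) fz
    rwa [show ((k:ℤ)-((i:ℤ)+(m:ℤ))-(i:ℤ))+1 = (k:ℤ)+1-((i:ℤ)+(m:ℤ))-(i:ℤ) from by ring] at this
  -- (F4) the extra z-product as a `gg14` product
  have h3 : P14 ((k:ℤ)-2*((i:ℤ)+(m:ℤ))+1) ((k:ℤ)-((i:ℤ)+(m:ℤ))-(i:ℤ)) fz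
      = (-1:K14)^m * ∏ t ∈ Finset.Icc ((m:ℤ)) (2*(m:ℤ)-1), gg14 c t := by
    rw [P14, Icc_reflect14 _ _ ((k:ℤ)-2*(i:ℤ))]
    rw [show (k:ℤ)-2*(i:ℤ)-((k:ℤ)-((i:ℤ)+(m:ℤ))-(i:ℤ)) = (m:ℤ) from by ring,
        show (k:ℤ)-2*(i:ℤ)-((k:ℤ)-2*((i:ℤ)+(m:ℤ))+1) = 2*(m:ℤ)-1 from by ring]
    calc ∏ t ∈ Finset.Icc ((m:ℤ)) (2*(m:ℤ)-1), fz ((k:ℤ)-2*(i:ℤ)-t)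
        = ∏ t ∈ Finset.Icc ((m:ℤ)) (2*(m:ℤ)-1), ((-1) * gg14 c t) := by
          refine Finset.prod_congr rfl fun t _ => ?_
          rw [hfz, hc, gg14]
          push_cast
          ring
      _ = (∏ _t ∈ Finset.Icc ((m:ℤ)) (2*(m:ℤ)-1), (-1:K14))
            * ∏ t ∈ Finset.Icc ((m:ℤ)) (2*(m:ℤ)-1), gg14 c t := Finset.prod_mul_distrib
      _ = (-1:K14)^m * ∏ t ∈ Finset.Icc ((m:ℤ)) (2*(m:ℤ)-1), gg14 c t := by
          rw [Finset.prod_const, Int.card_Icc,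
            show (2*(m:ℤ)-1+1-(m:ℤ)).toNat = m from by omega]
  -- (F5) the mz-product as a `gg14` product
  have h4 : P14 (2*((i:ℤ)+(m:ℤ))-(k:ℤ)+1) ((i:ℤ)+(n:ℤ)-(k:ℤ)+((i:ℤ)+(m:ℤ))) fmz
      = ∏ t ∈ Finset.Icc (2*(m:ℤ)+1) ((m:ℤ)+(n:ℤ)), gg14 c t := by
    rw [P14, Icc_shift14 _ _ ((k:ℤ)-2*(i:ℤ))]
    rw [show 2*((i:ℤ)+(m:ℤ))-(k:ℤ)+1+((k:ℤ)-2*(i:ℤ)) = 2*(m:ℤ)+1 from by ring,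
        show (i:ℤ)+(n:ℤ)-(k:ℤ)+((i:ℤ)+(m:ℤ))+((k:ℤ)-2*(i:ℤ)) = (m:ℤ)+(n:ℤ) from by ring]
    refine Finset.prod_congr rfl fun t _ => ?_
    rw [hfmz, hc, gg14]
    push_cast
    ring
  -- (F6) split the middle product
  have h5 : ∏ t ∈ Finset.Icc ((m:ℤ)) ((m:ℤ)+(n:ℤ)), gg14 c t
      = (∏ t ∈ Finset.Icc ((m:ℤ)) (2*(m:ℤ)-1), gg14 c t)
        * (gg14 c (2*(m:ℤ))
          * ∏ t ∈ Finset.Icc (2*(m:ℤ)+1) ((m:ℤ)+(n:ℤ)), gg14 c t) := by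
    rw [Icc_split14 ((m:ℤ)) (2*(m:ℤ)-1) ((m:ℤ)+(n:ℤ)) (by omega) (by omega),
      show (2*(m:ℤ)-1)+1 = 2*(m:ℤ) from by ring,
      Icc_split14 (2*(m:ℤ)) (2*(m:ℤ)) ((m:ℤ)+(n:ℤ)) (by omega) (by omega),
      Finset.Icc_self, Finset.prod_singleton]
  -- the binomial identity
  have h6 : (((i+m).choose i : ℕ) : K14) * (((i+n).choose (i+m) : ℕ) : K14)
      = (((i+n).choose i : ℕ) : K14) * ((n.choose m : ℕ) : K14) := by
    have h := Nat.choose_mul (n := i+n) (show i ≤ i+m by omega)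
    rw [Nat.add_sub_cancel_left, Nat.add_sub_cancel_left] at h
    exact_mod_cast congrArg (Nat.cast : ℕ → K14) (by rw [Nat.mul_comm] at h; exact h)
  -- nonvanishing
  have hA2 : P14 0 ((k:ℤ)-((i:ℤ)+(m:ℤ))-1) fεz ≠ 0 := P14_ne _ _ _ fun r => fez_ne14 r
  have hA3 : P14 ((k:ℤ)+1-((i:ℤ)+(m:ℤ))-(i:ℤ)) ((k:ℤ)-((i:ℤ)+(m:ℤ))) fz ≠ 0 :=
    P14_ne _ _ _ fun r => fz_ne14 r
  have hPa : (∏ t ∈ Finset.Icc ((m:ℤ)) (2*(m:ℤ)-1), gg14 c t) ≠ 0 :=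
    Finset.prod_ne_zero_iff.2 fun t _ => gg14_ne c t
  have hPb : (∏ t ∈ Finset.Icc (2*(m:ℤ)+1) ((m:ℤ)+(n:ℤ)), gg14 c t) ≠ 0 :=
    Finset.prod_ne_zero_iff.2 fun t _ => gg14_ne c t
  have hg2m : gg14 c (2*(m:ℤ)) ≠ 0 := gg14_ne c _
  rw [h1, h2, h3, h4, h5]
  exact alg_aux14 m _ _ _ _ _ _ _ _ _ _ _ h6 hA2 hA3 hPa hPb hg2m

end Term

lemma Tval14' (k : ℕ) (i jj j' : Fin (k+1)) (m n : ℕ) (hmn : m ≤ n) (hik : (i:ℕ) + n ≤ k)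
    (hjj : (jj:ℕ) = (i:ℕ) + m) (hj' : (j':ℕ) = (i:ℕ) + n) :
    Sinv14 k i jj * S14 k jj j'
    = (((i:ℕ)+n).choose (i:ℕ) : K14)
      * P14 ((i:ℕ):ℤ) (((i:ℕ):ℤ)+((n:ℕ):ℤ)-1) (fun r => r * φ14 + ε14)
      * ((-1:K14)^m * ((n.choose m : ℕ) : K14) * gg14 (2*((i:ℕ):ℤ)-((k:ℕ):ℤ)) (2*((m:ℕ):ℤ))
          / ∏ t ∈ Finset.Icc ((m:ℕ):ℤ) (((m:ℕ):ℤ)+(n:ℕ)), gg14 (2*((i:ℕ):ℤ)-((k:ℕ):ℤ)) t) := by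
  obtain ⟨iv, hiv⟩ := i
  obtain ⟨jv, hjv⟩ := jj
  obtain ⟨j'v, hj'v⟩ := j'
  have hjj' : jv = iv + m := hjj
  have hj'' : j'v = iv + n := hj'
  subst hjj' hj''
  exact Tval14 k iv m n hmn hik hjv hj'v

theorem stmt_14 (k : ℕ) (i j' : Fin (k + 1)) :
    ∑ j : Fin (k + 1), Sinv14 k i j * S14 k j j' = if i = j' then 1 else 0 := by
  by_cases hij : (i : ℕ) ≤ (j' : ℕ)
  case neg =>
    have hz : ∀ j : Fin (k+1), Sinv14 k i j * S14 k j j' = 0 := by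
      intro j
      by_cases h : (i:ℕ) ≤ (j:ℕ)
      · rw [S14_eq_zero (by omega), mul_zero]
      · rw [Sinv14_eq_zero h, zero_mul]
    rw [Finset.sum_eq_zero (fun j _ => hz j), if_neg (by intro h; subst h; exact hij le_rfl)]
  case pos =>
    obtain ⟨n, hn⟩ : ∃ n, (j' : ℕ) = (i : ℕ) + n := ⟨(j':ℕ) - (i:ℕ), by omega⟩
    have hik : (i:ℕ) + n ≤ k := by have := j'.isLt; omega
    set jm : ℕ → Fin (k+1) := fun m => ⟨min ((i:ℕ)+m) k, by omega⟩ with hjm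
    have hjval : ∀ m, m ≤ n → ((jm m : Fin (k+1)) : ℕ) = (i:ℕ)+m := by
      intro m hm
      simp only [hjm]
      omega
    have hinj : ∀ a ∈ Finset.range (n+1), ∀ b ∈ Finset.range (n+1), jm a = jm b → a = b := by
      intro a ha b hb hab
      simp only [Finset.mem_range] at ha hb
      have := congrArg (fun j : Fin (k+1) => (j : ℕ)) hab
      rw [hjval a (by omega), hjval b (by omega)] at this
      omega
    have hsum : ∑ j : Fin (k + 1), Sinv14 k i j * S14 k j j'
        = ∑ m ∈ Finset.range (n+1), Sinv14 k i (jm m) * S14 k (jm m) j' := by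
      calc ∑ j : Fin (k + 1), Sinv14 k i j * S14 k j j'
          = ∑ j ∈ (Finset.range (n+1)).image jm, Sinv14 k i j * S14 k j j' := by
            refine (Finset.sum_subset (Finset.subset_univ _) ?_).symm
            intro j _ hj
            by_cases h : (i:ℕ) ≤ (j:ℕ)
            · by_cases h2 : (j:ℕ) ≤ (j':ℕ)
              · exfalso
                apply hj
                simp only [Finset.mem_image, Finset.mem_range]
                refine ⟨(j:ℕ) - (i:ℕ), by omega, ?_⟩
                apply Fin.ext
                rw [hjval _ (by omega)]
                omega
              · rw [S14_eq_zero h2, mul_zero]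
            · rw [Sinv14_eq_zero h, zero_mul]
        _ = ∑ m ∈ Finset.range (n+1), Sinv14 k i (jm m) * S14 k (jm m) j' :=
            Finset.sum_image hinj
    rw [hsum]
    rcases Nat.eq_zero_or_pos n with hn0 | hn1
    · -- diagonal case
      subst hn0
      rw [if_pos (Fin.ext (by omega) : i = j')]
      rw [Finset.sum_range_one]
      rw [Tval14' k i (jm 0) j' 0 0 le_rfl hik (hjval 0 le_rfl) (by omega)]
      rw [P14_empty _ _ (by norm_num), Nat.add_zero, Nat.choose_self, Nat.choose_self]
      norm_num
      exact gg14_ne _ _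
    · -- off-diagonal case
      rw [if_neg (fun h => by rw [h] at hn; omega)]
      have hterm : ∀ m ∈ Finset.range (n+1), Sinv14 k i (jm m) * S14 k (jm m) j'
          = (((i:ℕ)+n).choose (i:ℕ) : K14)
              * P14 ((i:ℕ):ℤ) (((i:ℕ):ℤ)+((n:ℕ):ℤ)-1) (fun r => r * φ14 + ε14)
              * ((-1:K14)^m * ((n.choose m : ℕ) : K14)
                  * gg14 (2*((i:ℕ):ℤ)-((k:ℕ):ℤ)) (2*((m:ℕ):ℤ))
                  / ∏ t ∈ Finset.Icc ((m:ℕ):ℤ) (((m:ℕ):ℤ)+(n:ℕ)),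
                      gg14 (2*((i:ℕ):ℤ)-((k:ℕ):ℤ)) t) := by
        intro m hm
        simp only [Finset.mem_range] at hm
        exact Tval14' k i (jm m) j' m n (by omega) hik (hjval m (by omega)) hn
      rw [Finset.sum_congr rfl hterm, ← Finset.mul_sum,
        sumR14 n hn1 (2*((i:ℕ):ℤ)-((k:ℕ):ℤ)), mul_zero]

end
end

section
/- Let i ≤ j' and k, n be integers. Define for integer r̃ the term T(r̃) = C(j', j)·C(j, i)·(k − 2j − n)/(r̃!·(j'−i−r̃)!) where j = k − j' + r̃ − n, with the convention that C(a,b) = 0 unless 0 ≤ b ≤ a, and 1/m! = 0 for m < 0. Then Σ_{r̃ ∈ ℤ} T(r̃) = 0. -/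
/-- Binomial coefficient `C(a,b)` for integer arguments, zero unless `0 ≤ b ≤ a`. -/
noncomputable def zchoose (a b : ℤ) : ℚ :=
  if 0 ≤ b ∧ b ≤ a then (Nat.choose a.toNat b.toNat : ℚ) else 0

/-- `1/m!` for integer `m`, zero when `m < 0`. -/
noncomputable def invFact (m : ℤ) : ℚ :=
  if 0 ≤ m then 1 / (Nat.factorial m.toNat : ℚ) else 0

lemma zchoose_mul_zchoose (a b c : ℤ) (ha : 0 ≤ a) (hc : 0 ≤ c) :
    zchoose a b * zchoose b c =
      ((a.toNat.factorial : ℚ) / (c.toNat.factorial : ℚ)) * invFact (a - b) * invFact (b - c) := by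
  by_cases h1 : 0 ≤ b ∧ b ≤ a
  · by_cases h2 : c ≤ b
    · unfold zchoose invFact
      rw [if_pos h1, if_pos ⟨hc, h2⟩, if_pos (by omega), if_pos (by omega)]
      have hAB : b.toNat ≤ a.toNat := by omega
      have hBC : c.toNat ≤ b.toNat := by omega
      rw [Nat.cast_choose ℚ hAB, Nat.cast_choose ℚ hBC]
      have e1 : (a - b).toNat = a.toNat - b.toNat := by omega
      have e2 : (b - c).toNat = b.toNat - c.toNat := by omega
      rw [e1, e2]
      have f1 : (Nat.factorial b.toNat : ℚ) ≠ 0 := Nat.cast_ne_zero.mpr (Nat.factorial_ne_zero _)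
      have f2 : (Nat.factorial c.toNat : ℚ) ≠ 0 := Nat.cast_ne_zero.mpr (Nat.factorial_ne_zero _)
      have f3 : (Nat.factorial (a.toNat - b.toNat) : ℚ) ≠ 0 :=
        Nat.cast_ne_zero.mpr (Nat.factorial_ne_zero _)
      have f4 : (Nat.factorial (b.toNat - c.toNat) : ℚ) ≠ 0 :=
        Nat.cast_ne_zero.mpr (Nat.factorial_ne_zero _)
      field_simp
    · have hz : zchoose b c = 0 := by unfold zchoose; rw [if_neg (by omega)]
      have hz' : invFact (b - c) = 0 := by unfold invFact; rw [if_neg (by omega)]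
      rw [hz, hz']; ring
  · have hz : zchoose a b = 0 := by unfold zchoose; rw [if_neg h1]
    rcases not_and_or.mp h1 with h | h
    · have hz' : invFact (b - c) = 0 := by unfold invFact; rw [if_neg (by omega)]
      rw [hz, hz']; ring
    · have hz' : invFact (a - b) = 0 := by unfold invFact; rw [if_neg (by omega)]
      rw [hz, hz']; ring

lemma sym_part (i j j' r : ℤ) :
    zchoose j' j * zchoose j i * invFact r * invFact (j' - i - r) =
      zchoose j' (j' - r) * zchoose (j' - r) i * invFact (j' - j) * invFact (j - i) := by
  by_cases hi : 0 ≤ i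
  · by_cases hj' : 0 ≤ j'
    · rw [zchoose_mul_zchoose j' j i hj' hi, zchoose_mul_zchoose j' (j' - r) i hj' hi]
      have e1 : j' - (j' - r) = r := by ring
      have e2 : j' - r - i = j' - i - r := by ring
      rw [e1, e2]; ring
    · have h1 : zchoose j' j = 0 := by unfold zchoose; rw [if_neg (by omega)]
      have h2 : zchoose j' (j' - r) = 0 := by unfold zchoose; rw [if_neg (by omega)]
      rw [h1, h2]; ring
  · have h1 : zchoose j i = 0 := by unfold zchoose; rw [if_neg (by omega)]
    have h2 : zchoose (j' - r) i = 0 := by unfold zchoose; rw [if_neg (by omega)]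
    rw [h1, h2]; ring

theorem stmt_15 (i j' k n : ℤ) (hij : i ≤ j') :
    ∑ᶠ r : ℤ,
      (zchoose j' (k - j' + r - n) * zchoose (k - j' + r - n) i
        * ((k - 2 * (k - j' + r - n) - n : ℤ) : ℚ)
        * invFact r * invFact (j' - i - r)) = 0 := by
  set T : ℤ → ℚ := fun r =>
    zchoose j' (k - j' + r - n) * zchoose (k - j' + r - n) i
      * ((k - 2 * (k - j' + r - n) - n : ℤ) : ℚ)
      * invFact r * invFact (j' - i - r) with hT
  have key : ∀ r : ℤ, T (2 * j' - k + n - r) = - T r := by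
    intro r
    have e1 : k - j' + (2 * j' - k + n - r) - n = j' - r := by ring
    have e2 : 2 * j' - k + n - r = j' - (k - j' + r - n) := by ring
    have e3 : j' - i - (2 * j' - k + n - r) = (k - j' + r - n) - i := by ring
    simp only [hT]
    rw [e1, e3, e2]
    have e4 : ((k - 2 * (j' - r) - n : ℤ) : ℚ) = - ((k - 2 * (k - j' + r - n) - n : ℤ) : ℚ) := by
      push_cast; ring
    rw [e4]
    have := sym_part i (k - j' + r - n) j' r
    linear_combination (((k - 2 * (k - j' + r - n) - n : ℤ) : ℚ)) * this
  have h1 : ∑ᶠ r : ℤ, T r = ∑ᶠ r : ℤ, T (2 * j' - k + n - r) :=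
    (finsum_comp_equiv (Equiv.subLeft (2 * j' - k + n))).symm
  have h2 : ∑ᶠ r : ℤ, T (2 * j' - k + n - r) = - ∑ᶠ r : ℤ, T r := by
    simp only [key]
    exact finsum_neg_distrib T
  have : ∑ᶠ r : ℤ, T r = - ∑ᶠ r : ℤ, T r := h1.trans h2
  linarith
end

section
/- Let i ≤ j' and k, n be integers, and set j(r̃) = k − j' + r̃ − n. With conventions C(a,b) = 0 unless 0 ≤ b ≤ a and 1/m! = 0 for m < 0, the function g(r̃) = C(j', j(r̃))·C(j(r̃), i)/(r̃!·(j'−i−r̃)!) is symmetric under the substitution r̃ ↦ 2j' − (k − n) − r̃, i.e., g(r̃) = g(2j' − (k − n) − r̃) for all integers r̃. -/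
lemma stmt_16_key (i j' m r : ℤ) :
    zchoose j' m * zchoose m i * invFact r * invFact (j' - i - r)
      = zchoose j' (j' - r) * zchoose (j' - r) i * invFact (j' - m) * invFact (m - i) := by
  by_cases hP : 0 ≤ i ∧ i ≤ m ∧ m ≤ j' ∧ 0 ≤ r ∧ r ≤ j' - i
  · obtain ⟨h0i, him, hmj, h0r, hrj⟩ := hP
    lift i to ℕ using h0i with I
    lift m to ℕ using (by omega : (0:ℤ) ≤ m) with M
    lift j' to ℕ using (by omega : (0:ℤ) ≤ j') with J
    lift r to ℕ using h0r with R
    have hIM : I ≤ M := by exact_mod_cast him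
    have hMJ : M ≤ J := by exact_mod_cast hmj
    have hRJ : R ≤ J - I := by omega
    rw [zchoose, if_pos ⟨by positivity, hmj⟩, zchoose, if_pos ⟨by positivity, him⟩,
      zchoose, if_pos ⟨by omega, by omega⟩, zchoose, if_pos ⟨by positivity, by omega⟩,
      invFact, if_pos (by positivity), invFact, if_pos (by omega), invFact, if_pos (by omega),
      invFact, if_pos (by omega)]
    have e1 : ((J:ℤ)).toNat = J := by omega
    have e2 : ((M:ℤ)).toNat = M := by omega
    have e3 : ((I:ℤ)).toNat = I := by omega
    have e4 : ((R:ℤ)).toNat = R := by omega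
    have e5 : ((J:ℤ) - R).toNat = J - R := by omega
    have e6 : ((J:ℤ) - I - R).toNat = J - I - R := by omega
    have e7 : ((J:ℤ) - M).toNat = J - M := by omega
    have e8 : ((M:ℤ) - I).toNat = M - I := by omega
    rw [e1, e2, e3, e4, e5, e6, e7, e8]
    rw [Nat.cast_choose ℚ hMJ, Nat.cast_choose ℚ hIM,
      Nat.cast_choose ℚ (show J - R ≤ J by omega),
      Nat.cast_choose ℚ (show I ≤ J - R by omega)]
    have e9 : J - (J - R) = R := by omega
    have e10 : J - R - I = J - I - R := by omega
    rw [e9, e10]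
    have f : ∀ t : ℕ, ((t.factorial : ℚ)) ≠ 0 := fun t => by
      exact_mod_cast t.factorial_ne_zero
    field_simp
  · have hL : zchoose j' m * zchoose m i * invFact r * invFact (j' - i - r) = 0 := by
      rcases not_and_or.mp hP with h | h
      · rw [show zchoose m i = 0 by rw [zchoose, if_neg (by omega)]]; ring
      rcases not_and_or.mp h with h | h
      · rw [show zchoose m i = 0 by rw [zchoose, if_neg (by omega)]]; ring
      rcases not_and_or.mp h with h | h
      · rw [zchoose, if_neg (by omega)]; ring
      rcases not_and_or.mp h with h | h
      · rw [show invFact r = 0 by rw [invFact, if_neg (by omega)]]; ring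
      · rw [show invFact (j' - i - r) = 0 by rw [invFact, if_neg (by omega)]]; ring
    have hR : zchoose j' (j' - r) * zchoose (j' - r) i * invFact (j' - m) * invFact (m - i) = 0 := by
      rcases not_and_or.mp hP with h | h
      · rw [show zchoose (j' - r) i = 0 by rw [zchoose, if_neg (by omega)]]; ring
      rcases not_and_or.mp h with h | h
      · rw [show invFact (m - i) = 0 by rw [invFact, if_neg (by omega)]]; ring
      rcases not_and_or.mp h with h | h
      · rw [show invFact (j' - m) = 0 by rw [invFact, if_neg (by omega)]]; ring
      rcases not_and_or.mp h with h | h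
      · rw [zchoose, if_neg (by omega)]; ring
      · rw [show zchoose (j' - r) i = 0 by rw [zchoose, if_neg (by omega)]]; ring
    rw [hL, hR]

theorem stmt_16 (i j' k n : ℤ) (hij : i ≤ j')
    (g : ℤ → ℚ)
    (hg : ∀ r : ℤ, g r = zchoose j' (k - j' + r - n) * zchoose (k - j' + r - n) i
        * invFact r * invFact (j' - i - r)) :
    ∀ r : ℤ, g r = g (2 * j' - (k - n) - r) := by
  intro r
  rw [hg, hg]
  have e1 : k - j' + (2 * j' - (k - n) - r) - n = j' - r := by ring
  have e2 : 2 * j' - (k - n) - r = j' - (k - j' + r - n) := by ring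
  have e3 : j' - i - (2 * j' - (k - n) - r) = (k - j' + r - n) - i := by ring
  rw [e1]
  rw [show invFact (2 * j' - (k - n) - r) = invFact (j' - (k - j' + r - n)) by rw [e2],
    show invFact (j' - i - (2 * j' - (k - n) - r)) = invFact ((k - j' + r - n) - i) by rw [e3]]
  exact stmt_16_key i j' (k - j' + r - n) r
end

section
/- Let ℓ ≥ 1, n ≥ 1, k with 0 ≤ k ≤ nℓ, and set k^∨ = nℓ − k. Let Φ ∈ End(ℂᵏ) with Φ^ℓ = 0 and Q̃ ∈ Hom(ℂᵏ, ℂⁿ), and let Ã be the (ℓn)×k matrix with row blocks Q̃, Q̃Φ, …, Q̃Φ^{ℓ−1}; assume rank Ã = k. Let S_n ∈ End(ℂ^{ℓn}) be the block upshift operator sending row block m to row block m−1 (and zero on the first block), so that ÃΦ = S_n Ã. Let B̃ be an (ℓn)×k^∨ matrix whose columns form a basis of ker(Ãᵀ). Then there exists Φ^∨ ∈ End(ℂ^{k^∨}) such that S_nᵀ B̃ = B̃ Φ^∨, and this Φ^∨ satisfies (Φ^∨)^ℓ = 0. -/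
open Matrix

theorem stmt_18 (ℓ n k : ℕ) (hℓ : 1 ≤ ℓ) (hn : 1 ≤ n) (hk : k ≤ n * ℓ)
    (Φ : Matrix (Fin k) (Fin k) ℂ) (hΦ : Φ ^ ℓ = 0)
    (Qt : Matrix (Fin n) (Fin k) ℂ)
    -- the stacked matrix Ã with row blocks Q̃, Q̃Φ, …, Q̃Φ^{ℓ−1}
    (Atilde : Matrix (Fin ℓ × Fin n) (Fin k) ℂ)
    (hA : ∀ (m : Fin ℓ) (a : Fin n) (b : Fin k),
      Atilde (m, a) b = (Qt * Φ ^ (m : ℕ)) a b)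
    (hArank : Atilde.rank = k)
    -- the block upshift operator S_n
    (Sn : Matrix (Fin ℓ × Fin n) (Fin ℓ × Fin n) ℂ)
    (hSn : ∀ (m m' : Fin ℓ) (a a' : Fin n),
      Sn (m, a) (m', a') = if (m' : ℕ) = (m : ℕ) + 1 ∧ a = a' then 1 else 0)
    -- B̃, whose columns form a basis of ker Ãᵀ
    (Btilde : Matrix (Fin ℓ × Fin n) (Fin (n * ℓ - k)) ℂ)
    (hBker : Atildeᵀ * Btilde = 0)
    (hBrank : Btilde.rank = n * ℓ - k) :
    (∃ Φv : Matrix (Fin (n * ℓ - k)) (Fin (n * ℓ - k)) ℂ,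
        Snᵀ * Btilde = Btilde * Φv) ∧
    (∀ Φv : Matrix (Fin (n * ℓ - k)) (Fin (n * ℓ - k)) ℂ,
        Snᵀ * Btilde = Btilde * Φv → Φv ^ ℓ = 0) := by
  -- Step 1: Sn * Atilde = Atilde * Φ
  have hSA : Sn * Atilde = Atilde * Φ := by
    ext ⟨m, a⟩ b
    have hRHS : (Atilde * Φ) (m, a) b = (Qt * Φ ^ ((m : ℕ) + 1)) a b := by
      rw [mul_apply]
      have : (Qt * Φ ^ ((m : ℕ) + 1)) a b = ∑ c, Atilde (m, a) c * Φ c b := by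
        rw [pow_succ, ← Matrix.mul_assoc, mul_apply]
        refine Finset.sum_congr rfl fun c _ => by rw [hA]
      rw [this]
    rw [hRHS, mul_apply]
    by_cases hm : (m : ℕ) + 1 < ℓ
    · rw [Finset.sum_eq_single (⟨⟨(m : ℕ) + 1, hm⟩, a⟩ : Fin ℓ × Fin n)]
      · rw [hSn]
        simp [hA]
      · rintro ⟨m', a'⟩ _ hne
        rw [hSn]
        rw [if_neg]
        · ring
        · rintro ⟨h1, h2⟩
          exact hne (by subst h2; exact Prod.ext (Fin.ext h1) rfl)
      · intro h; exact absurd (Finset.mem_univ _) h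
    · have hml : (m : ℕ) + 1 = ℓ := le_antisymm m.isLt (not_lt.mp hm)
      have : (Φ : Matrix (Fin k) (Fin k) ℂ) ^ ((m : ℕ) + 1) = 0 := by rw [hml, hΦ]
      rw [this, Matrix.mul_zero]
      refine Finset.sum_eq_zero ?_
      rintro ⟨m', a'⟩ _
      rw [hSn, if_neg, zero_mul]
      rintro ⟨h1, _⟩
      exact absurd (h1 ▸ m'.isLt) (by omega)
  -- Step 2: Atildeᵀ * (Snᵀ * Btilde) = 0
  have hkerC : Atildeᵀ * (Snᵀ * Btilde) = 0 := by
    rw [← Matrix.mul_assoc, ← transpose_mul, hSA, transpose_mul, Matrix.mul_assoc,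
      hBker, Matrix.mul_zero]
  -- dimension count: range Btilde.mulVecLin = ker Atildeᵀ.mulVecLin
  set K := LinearMap.ker (Atildeᵀ.mulVecLin) with hK
  set W := LinearMap.range (Btilde.mulVecLin) with hW
  have hWK : W ≤ K := by
    rintro x ⟨v, rfl⟩
    simp only [LinearMap.mem_ker, mulVecLin_apply, hK]
    rw [mulVec_mulVec, hBker, zero_mulVec]
  have hfinW : Module.finrank ℂ W = n * ℓ - k := hBrank
  have hfinK : Module.finrank ℂ K = n * ℓ - k := by
    have h1 := LinearMap.finrank_range_add_finrank_ker (Atildeᵀ.mulVecLin)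
    have h2 : Module.finrank ℂ (Fin ℓ × Fin n → ℂ) = ℓ * n := by
      simp [Module.finrank_pi]
    have h3 : Atildeᵀ.rank = k := by rw [Matrix.rank_transpose, hArank]
    have h4 : Module.finrank ℂ (LinearMap.range Atildeᵀ.mulVecLin) = k := h3
    rw [h2, h4] at h1
    show Module.finrank ℂ (LinearMap.ker Atildeᵀ.mulVecLin) = n * ℓ - k
    have h5 : ℓ * n = n * ℓ := Nat.mul_comm ℓ n
    omega
  have hKW : W = K :=
    Submodule.eq_of_le_of_finrank_le hWK (by rw [hfinW, hfinK])
  -- columns of Snᵀ * Btilde lie in K = W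
  have hcol : ∀ j : Fin (n * ℓ - k),
      (fun i => (Snᵀ * Btilde) i j) ∈ W := by
    intro j
    rw [hKW]
    simp only [LinearMap.mem_ker, mulVecLin_apply, hK]
    funext a
    have := congrFun (congrFun hkerC a) j
    rw [mul_apply] at this
    simpa [mulVec, dotProduct] using this
  choose w hw using fun j => hcol j
  -- the matrix Φv
  refine ⟨⟨Matrix.of fun i j => w j i, ?_⟩, ?_⟩
  · ext a j
    have := congrFun (hw j) a
    simp only [mulVecLin_apply, mulVec, dotProduct] at this
    rw [mul_apply]
    exact this.symm
  · -- nilpotency part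
    intro Φv hΦv
    -- Sn is nilpotent
    have hSnil : ∀ p : ℕ, ∀ (m m' : Fin ℓ) (a a' : Fin n),
        (m' : ℕ) < (m : ℕ) + p → (Sn ^ p) (m, a) (m', a') = 0 := by
      intro p
      induction p with
      | zero =>
        intro m m' a a' h
        rw [pow_zero]
        rw [Matrix.one_apply_ne]
        intro heq
        rw [Prod.mk.injEq] at heq
        exact absurd (congrArg Fin.val heq.1) (by omega)
      | succ p ih =>
        intro m m' a a' h
        rw [pow_succ']
        rw [mul_apply]
        refine Finset.sum_eq_zero ?_
        rintro ⟨m₂, a₂⟩ _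
        rw [hSn]
        by_cases hc : (m₂ : ℕ) = (m : ℕ) + 1 ∧ a = a₂
        · rw [if_pos hc, one_mul]
          exact ih m₂ m' a₂ a' (by omega)
        · rw [if_neg hc, zero_mul]
    have hSl : Sn ^ ℓ = 0 := by
      ext ⟨m, a⟩ ⟨m', a'⟩
      rw [Matrix.zero_apply]
      exact hSnil ℓ m m' a a' (by omega)
    have hSTl : (Snᵀ) ^ ℓ = 0 := by
      rw [← Matrix.transpose_pow, hSl, Matrix.transpose_zero]
    -- iterate the intertwining relation
    have hiter : ∀ p : ℕ, (Snᵀ) ^ p * Btilde = Btilde * Φv ^ p := by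
      intro p
      induction p with
      | zero => simp
      | succ p ih =>
        rw [pow_succ, Matrix.mul_assoc, hΦv, ← Matrix.mul_assoc, ih,
          Matrix.mul_assoc, ← pow_succ]
    have hBzero : Btilde * Φv ^ ℓ = 0 := by
      rw [← hiter, hSTl, Matrix.zero_mul]
    -- Btilde has full column rank, hence mulVecLin injective
    have hinj : Function.Injective Btilde.mulVecLin := by
      rw [← LinearMap.ker_eq_bot]
      rw [← Submodule.finrank_eq_zero (R := ℂ)]
      have h1 := LinearMap.finrank_range_add_finrank_ker (Btilde.mulVecLin)
      have h2 : Module.finrank ℂ (Fin (n * ℓ - k) → ℂ) = n * ℓ - k := by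
        simp
      have h4 : Module.finrank ℂ (LinearMap.range Btilde.mulVecLin) = n * ℓ - k :=
        hBrank
      rw [h2, h4] at h1
      omega
    -- conclude Φv ^ ℓ = 0
    have hcols : ∀ v, (Φv ^ ℓ) *ᵥ v = 0 := by
      intro v
      apply hinj
      simp only [mulVecLin_apply, mulVec_mulVec, hBzero, zero_mulVec, map_zero]
    ext i j
    have := congrFun (hcols (Pi.single j 1)) i
    simpa using this
end
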